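/- Fix a finite field F_q and integers 1 ≤ d_1 ≤ d_2 ≤ … ≤ d_m with m ≥ 2. The number of m-tuples (f_1,…,f_m) of monic polynomials in F_q[x] with deg f_i = d_i for all i and with no common root in an algebraic closure of F_q (equivalently, gcd(f_1,…,f_m) = 1) equals q^{d_1+⋯+d_m} − q^{d_1+⋯+d_m−m+1}. -/

import Mathlib

open Polynomial Finset

section Aux

variable {F : Type*} [Field F] [Fintype F]

/-- Monic polynomials of degree `e` are equivalent to `e`-tuples of coefficients. -/
noncomputable def monicEquivFun (e : ℕ) :
    { p : F[X] // p.Monic ∧ p.natDegree = e } ≃ (Fin e → F) :=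
  (Polynomial.monicEquivDegreeLT e).trans (Polynomial.degreeLTEquiv F e).toEquiv

lemma card_monic (e : ℕ) :
    Nat.card { p : F[X] // p.Monic ∧ p.natDegree = e } = Fintype.card F ^ e := by
  rw [Nat.card_congr (monicEquivFun e), Nat.card_eq_fintype_card, Fintype.card_fun,
    Fintype.card_fin]

instance monic_finite (e : ℕ) : Finite { p : F[X] // p.Monic ∧ p.natDegree = e } :=
  Finite.of_equiv _ (monicEquivFun (F := F) e).symm

/-- Tuples of monic polynomials with prescribed degrees. -/
noncomputable def tupEquiv {m : ℕ} (d : Fin m → ℕ) :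
    { f : Fin m → F[X] // ∀ i, (f i).Monic ∧ (f i).natDegree = d i } ≃
      ∀ i, { p : F[X] // p.Monic ∧ p.natDegree = d i } where
  toFun f i := ⟨f.1 i, f.2 i⟩
  invFun g := ⟨fun i => (g i).1, fun i => (g i).2⟩
  left_inv _ := rfl
  right_inv _ := rfl

lemma tup_finite {m : ℕ} (d : Fin m → ℕ) :
    Finite { f : Fin m → F[X] // ∀ i, (f i).Monic ∧ (f i).natDegree = d i } :=
  Finite.of_equiv _ (tupEquiv d).symm

lemma card_tup {m : ℕ} (d : Fin m → ℕ) :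
    Nat.card { f : Fin m → F[X] // ∀ i, (f i).Monic ∧ (f i).natDegree = d i }
      = Fintype.card F ^ (∑ i, d i) := by
  rw [Nat.card_congr (tupEquiv d), Nat.card_pi]
  simp_rw [card_monic]
  rw [Finset.prod_pow_eq_pow_sum]

/-- Count of coprime tuples of monic polynomials with prescribed degrees. -/
noncomputable def N (F : Type*) [Field F] [Fintype F] {m : ℕ} (d : Fin m → ℕ) : ℕ :=
  Nat.card {f : Fin m → F[X] //
      (∀ i, (f i).Monic ∧ (f i).natDegree = d i) ∧
      (∀ p : F[X], (∀ i, p ∣ f i) → IsUnit p)}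

variable [DecidableEq F] {m : ℕ} [NeZero m]

/-- If `g` is monic and `h` is a coprime tuple, the gcd of `g * h` is `g`. -/
lemma gcd_mul_eq {g : F[X]} (hgm : g.Monic) {h : Fin m → F[X]}
    (hcop : ∀ p : F[X], (∀ i, p ∣ h i) → IsUnit p) :
    Finset.univ.gcd (fun i => g * h i) = g := by
  have hg0 : g ≠ 0 := hgm.ne_zero
  set G := Finset.univ.gcd (fun i => g * h i) with hGdef
  have hgG : g ∣ G := Finset.dvd_gcd fun i _ => dvd_mul_right g (h i)
  obtain ⟨t, ht⟩ := hgG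
  have htu : IsUnit t := by
    refine hcop t fun i => ?_
    have hGi : G ∣ g * h i := Finset.gcd_dvd (Finset.mem_univ i)
    rw [ht] at hGi
    exact (mul_dvd_mul_iff_left hg0).1 hGi
  have hnorm : normalize G = G := Finset.normalize_gcd
  rw [← hnorm, ht, normalize_mul, normalize_eq_one.2 htu, mul_one,
    hgm.normalize_eq_self]

/-- Fiber equivalence: tuples whose gcd has degree `e` correspond to
a monic polynomial of degree `e` together with a coprime tuple of degrees `d i - e`. -/
noncomputable def fiberEquiv (d : Fin m → ℕ) (e : ℕ) (he : ∀ i, e ≤ d i) :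
    ({ p : F[X] // p.Monic ∧ p.natDegree = e } ×
      {h : Fin m → F[X] //
        (∀ i, (h i).Monic ∧ (h i).natDegree = d i - e) ∧
        (∀ p : F[X], (∀ i, p ∣ h i) → IsUnit p)}) ≃
    { f : { f : Fin m → F[X] // ∀ i, (f i).Monic ∧ (f i).natDegree = d i } //
        (Finset.univ.gcd f.1).natDegree = e } := by
  refine Equiv.ofBijective
    (fun gh =>
      ⟨⟨fun i => gh.1.1 * gh.2.1 i, fun i => by
        obtain ⟨⟨g, hgm, hge⟩, ⟨h, hh, hcop⟩⟩ := gh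
        refine ⟨hgm.mul (hh i).1, ?_⟩
        rw [Polynomial.natDegree_mul hgm.ne_zero (hh i).1.ne_zero, hge, (hh i).2]
        have := he i; omega⟩, by
        obtain ⟨⟨g, hgm, hge⟩, ⟨h, hh, hcop⟩⟩ := gh
        simpa [gcd_mul_eq hgm hcop] using hge⟩) ⟨?_, ?_⟩
  · rintro ⟨⟨g, hgm, hge⟩, ⟨h, hh, hcop⟩⟩ ⟨⟨g', hgm', hge'⟩, ⟨h', hh', hcop'⟩⟩ heq
    have htup : (fun i => g * h i) = (fun i => g' * h' i) := by
      have := congrArg (fun x => (x.1.1 : Fin m → F[X])) heq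
      simpa using this
    have hgg : g = g' := by
      rw [← gcd_mul_eq hgm hcop, ← gcd_mul_eq hgm' hcop', htup]
    have hhh : h = h' := by
      funext i
      have hi : g * h i = g' * h' i := congrFun htup i
      rw [← hgg] at hi
      exact mul_left_cancel₀ hgm.ne_zero hi
    subst hgg hhh
    rfl
  · rintro ⟨⟨f, hf⟩, hfe⟩
    set g := Finset.univ.gcd f with hgdef
    have hf0 : ∀ i, f i ≠ 0 := fun i => (hf i).1.ne_zero
    have hg0 : g ≠ 0 := by
      intro h0
      exact hf0 ⟨0, NeZero.pos m⟩ ((Finset.gcd_eq_zero_iff.1 h0) _ (Finset.mem_univ _))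
    have hgm : g.Monic := by
      have hn : normalize g = g := Finset.normalize_gcd
      rw [← hn]
      exact Polynomial.monic_normalize hg0
    have hdvd : ∀ i, g ∣ f i := fun i => Finset.gcd_dvd (Finset.mem_univ i)
    have hmul : ∀ i, g * (f i / g) = f i := fun i =>
      EuclideanDomain.mul_div_cancel' hg0 (hdvd i)
    have hmon : ∀ i, (f i / g).Monic := fun i => by
      refine Polynomial.Monic.of_mul_monic_left hgm ?_
      rw [hmul i]; exact (hf i).1
    have hdeg : ∀ i, (f i / g).natDegree = d i - e := by
      intro i
      have h1 : (g * (f i / g)).natDegree = g.natDegree + (f i / g).natDegree :=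
        Polynomial.natDegree_mul hg0 (hmon i).ne_zero
      rw [hmul i, (hf i).2] at h1
      have h2 : g.natDegree = e := hfe
      omega
    have hcop : ∀ p : F[X], (∀ i, p ∣ f i / g) → IsUnit p := by
      intro p hp
      have hgp : g * p ∣ g := by
        refine Finset.dvd_gcd fun i _ => ?_
        rw [← hmul i]
        exact mul_dvd_mul_left g (hp i)
      have : p ∣ 1 := (mul_dvd_mul_iff_left hg0).1 (by simpa using hgp)
      exact isUnit_of_dvd_one this
    refine ⟨⟨⟨g, hgm, hfe⟩, ⟨fun i => f i / g, fun i => ⟨hmon i, hdeg i⟩, hcop⟩⟩, ?_⟩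
    apply Subtype.ext; apply Subtype.ext
    funext i
    exact hmul i

lemma recursion (d : Fin m → ℕ) (hmin : ∀ i, d ⟨0, NeZero.pos m⟩ ≤ d i) :
    Fintype.card F ^ (∑ i, d i)
      = ∑ e ∈ Finset.range (d ⟨0, NeZero.pos m⟩ + 1),
          Fintype.card F ^ e * N F (fun i => d i - e) := by
  classical
  set k := d ⟨0, NeZero.pos m⟩ with hk
  have htf := tup_finite (F := F) d
  -- partition tuples by the degree of their gcd
  set φ : { f : Fin m → F[X] // ∀ i, (f i).Monic ∧ (f i).natDegree = d i } →
      Fin (k + 1) := fun f =>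
    ⟨(Finset.univ.gcd f.1).natDegree, by
      have hg0 : f.1 ⟨0, NeZero.pos m⟩ ≠ 0 := (f.2 _).1.ne_zero
      have hle : (Finset.univ.gcd f.1).natDegree ≤ (f.1 ⟨0, NeZero.pos m⟩).natDegree :=
        Polynomial.natDegree_le_of_dvd (Finset.gcd_dvd (Finset.mem_univ _)) hg0
      rw [(f.2 _).2] at hle
      omega⟩ with hφ
  have hsig := (Equiv.sigmaFiberEquiv φ).symm
  haveI : ∀ e : Fin (k + 1), Fintype { f // φ f = e } := fun e => Fintype.ofFinite _
  rw [← card_tup (F := F) d, Nat.card_congr hsig, Nat.card_eq_fintype_card,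
    Fintype.card_sigma]
  rw [← Fin.sum_univ_eq_sum_range
    (fun e => Fintype.card F ^ e * N F fun i => d i - e) (k + 1)]
  refine Finset.sum_congr rfl fun e _ => ?_
  have he : ∀ i, (e : ℕ) ≤ d i := fun i => le_trans (by omega) (hmin i)
  have hEq : ({ p : F[X] // p.Monic ∧ p.natDegree = (e : ℕ) } ×
      {h : Fin m → F[X] //
        (∀ i, (h i).Monic ∧ (h i).natDegree = d i - (e : ℕ)) ∧
        (∀ p : F[X], (∀ i, p ∣ h i) → IsUnit p)}) ≃ { f // φ f = e } := by
    refine (fiberEquiv d (e : ℕ) he).trans ?_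
    exact Equiv.subtypeEquiv (Equiv.refl _) (fun f => by
      simp [hφ, Fin.ext_iff])
  rw [← Nat.card_eq_fintype_card, ← Nat.card_congr hEq, Nat.card_prod, card_monic]
  rfl

end Aux

/-- The number of `m`-tuples of monic polynomials over `F_q` of degrees
`1 ≤ d_1 ≤ … ≤ d_m` (`m ≥ 2`) with no common factor equals
`q^{d_1+⋯+d_m} − q^{d_1+⋯+d_m−m+1}`. -/
theorem stmt_7 (F : Type*) [Field F] [Fintype F] (m : ℕ) (hm : 2 ≤ m)
    (d : Fin m → ℕ) (hmono : Monotone d) (hd : ∀ i, 1 ≤ d i) :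
    Nat.card {f : Fin m → Polynomial F //
        (∀ i, (f i).Monic ∧ (f i).natDegree = d i) ∧
        (∀ p : Polynomial F, (∀ i, p ∣ f i) → IsUnit p)}
      = Fintype.card F ^ (∑ i, d i)
        - Fintype.card F ^ ((∑ i, d i) - (m - 1)) := by
  classical
  haveI : NeZero m := ⟨by omega⟩
  set q := Fintype.card F with hq
  set i0 : Fin m := ⟨0, NeZero.pos m⟩ with hi0
  have hmin : ∀ i, d i0 ≤ d i := fun i => hmono (by simp [hi0, Fin.le_def])
  set k := d i0 with hkdef
  have hk1 : 1 ≤ k := hd i0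
  set d' : Fin m → ℕ := fun i => d i - 1 with hd'
  have hmin' : ∀ i, d' i0 ≤ d' i := fun i => by
    simp only [hd']; have := hmin i; omega
  have hrec := recursion (F := F) d hmin
  have hrec' := recursion (F := F) d' hmin'
  have hd'0 : d' i0 = k - 1 := rfl
  have hsum' : (∑ i, d' i) + m = ∑ i, d i :=
    calc (∑ i, d' i) + m = ∑ i : Fin m, (d' i + 1) := by
          rw [Finset.sum_add_distrib]; simp
    _ = ∑ i, d i := Finset.sum_congr rfl fun i _ => by
          have := hd i; simp only [hd']; omega
  have hmle : m ≤ ∑ i, d i := by omega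
  rw [Finset.sum_range_succ'] at hrec
  simp only [pow_zero, one_mul] at hrec
  have hshift : ∀ e, N F (fun i => d i - (e + 1)) = N F (fun i => d' i - e) := by
    intro e
    congr 1
    funext i
    simp only [hd']; omega
  have hkk : k - 1 + 1 = k := by omega
  have hsum_eq : ∑ e ∈ Finset.range k, q ^ (e + 1) * N F (fun i => d i - (e + 1))
      = q * q ^ (∑ i, d' i) := by
    rw [hrec', hd'0, hkk, Finset.mul_sum]
    refine Finset.sum_congr rfl fun e _ => ?_
    rw [hshift e]
    ring
  have hN0 : N F (fun i => d i - 0) = N F d := by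
    congr 1
  have key : q ^ (∑ i, d i) = q * q ^ ((∑ i, d i) - m) + N F d := by
    have h1 : (∑ i, d' i) = (∑ i, d i) - m := by omega
    rw [hrec, hN0, hsum_eq, h1]
  have hqpow : q * q ^ ((∑ i, d i) - m) = q ^ ((∑ i, d i) - (m - 1)) := by
    rw [← pow_succ']
    congr 1
    omega
  rw [hqpow] at key
  have hle : q ^ ((∑ i, d i) - (m - 1)) ≤ q ^ (∑ i, d i) :=
    Nat.pow_le_pow_right Fintype.card_pos (by omega)
  show N F d = _
  omega
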